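/- For every orientation Γ⃗ of a simply laced Dynkin diagram Γ with n vertices, the monoid KH(Γ⃗) has exactly 2^n idempotent elements. -/

import Mathlib

open FreeMonoid SimpleGraph

/-- The defining relations of a Hecke-Kiselman monoid associated with the
mixed graph encoded by the binary relation `Θ`. -/
inductive HKRel {ι : Type*} (Θ : ι → ι → Prop) : FreeMonoid ι → FreeMonoid ι → Prop
  | idem (i : ι) : HKRel Θ (of i * of i) (of i)
  | comm (i j : ι) (h₁ : ¬ Θ i j) (h₂ : ¬ Θ j i) :
      HKRel Θ (of i * of j) (of j * of i)
  | braid (i j : ι) (h₁ : Θ i j) (h₂ : Θ j i) :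
      HKRel Θ (of i * of j * of i) (of j * of i * of j)
  | kisel (i j : ι) (h₁ : Θ i j) (h₂ : ¬ Θ j i) :
      HKRel Θ (of i * of j * of i) (of i * of j)
  | kisel' (i j : ι) (h₁ : Θ i j) (h₂ : ¬ Θ j i) :
      HKRel Θ (of j * of i * of j) (of i * of j)

/-- The Hecke-Kiselman monoid of the mixed graph encoded by `Θ`. -/
abbrev HK {ι : Type*} (Θ : ι → ι → Prop) : Type _ := (conGen (HKRel Θ)).Quotient

/-- The canonical idempotent generators of a Hecke-Kiselman monoid. -/
def HK.gen {ι : Type*} (Θ : ι → ι → Prop) (i : ι) : HK Θ :=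
  (conGen (HKRel Θ)).mk' (FreeMonoid.of i)

/-- Dynkin diagram of type `D n` (meaningful for `4 ≤ n`). -/
def typeD (n : ℕ) : SimpleGraph (Fin n) :=
  SimpleGraph.fromRel (fun i j =>
    ((i : ℕ) + 1 = (j : ℕ) ∧ 1 ≤ (i : ℕ)) ∨ ((i : ℕ) = 0 ∧ (j : ℕ) = 2))

/-- Dynkin diagram of type `E n` (meaningful for `n = 6, 7, 8`). -/
def typeE (n : ℕ) : SimpleGraph (Fin n) :=
  SimpleGraph.fromRel (fun i j =>
    ((i : ℕ) + 1 = (j : ℕ) ∧ 1 ≤ (i : ℕ)) ∨ ((i : ℕ) = 0 ∧ (j : ℕ) = 3))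

/-- A graph is of type `A`, `D` or `E` if it is isomorphic to one of the
simply laced Dynkin diagrams `A n` (`n ≥ 1`), `D n` (`n ≥ 4`), `E6`, `E7`, `E8`. -/
def IsADE {V : Type*} (G : SimpleGraph V) : Prop :=
  (∃ n, 1 ≤ n ∧ Nonempty (G ≃g pathGraph n)) ∨
  (∃ n, 4 ≤ n ∧ Nonempty (G ≃g typeD n)) ∨
  (∃ n, (n = 6 ∨ n = 7 ∨ n = 8) ∧ Nonempty (G ≃g typeE n))

/-- A simply laced Dynkin diagram: a simple graph each of whose connected
components is of type `A`, `D` or `E`. -/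
def IsSimplyLacedDynkin {V : Type*} (G : SimpleGraph V) : Prop :=
  ∀ c : G.ConnectedComponent, IsADE (G.induce c.supp)

/-- `Θ` is an orientation of the simple graph `G`: every edge of `G` is given
exactly one direction. -/
def IsOrientation {V : Type*} (G : SimpleGraph V) (Θ : V → V → Prop) : Prop :=
  (∀ i j, G.Adj i j ↔ (Θ i j ∨ Θ j i)) ∧ (∀ i j, Θ i j → ¬ Θ j i)

namespace HKAux

section MonoidPart

variable {V : Type*} (Θ : V → V → Prop)

/-- Interpret a list of generators as an element of the Hecke–Kiselman monoid. -/
def hkw (l : List V) : HK Θ := (conGen (HKRel Θ)).mk' (FreeMonoid.ofList l)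

lemma hk_rel {a b : FreeMonoid V} (h : HKRel Θ a b) :
    (conGen (HKRel Θ)).mk' a = (conGen (HKRel Θ)).mk' b :=
  (Con.eq _).mpr (ConGen.Rel.of _ _ h)

lemma hkw_nil : hkw Θ ([] : List V) = 1 := by
  rw [hkw, ofList_nil, map_one]

lemma hkw_append (a b : List V) : hkw Θ (a ++ b) = hkw Θ a * hkw Θ b := by
  rw [hkw, ofList_append, map_mul]; rfl

lemma hkw_singleton (i : V) : hkw Θ [i] = HK.gen Θ i := rfl

lemma hkw_cons (i : V) (l : List V) : hkw Θ (i :: l) = HK.gen Θ i * hkw Θ l := by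
  rw [hkw, ofList_cons, map_mul]; rfl

lemma gen_idem (i : V) : HK.gen Θ i * HK.gen Θ i = HK.gen Θ i := by
  have := hk_rel Θ (HKRel.idem i)
  simpa [HK.gen] using this

lemma gen_comm {i j : V} (h₁ : ¬ Θ i j) (h₂ : ¬ Θ j i) :
    HK.gen Θ i * HK.gen Θ j = HK.gen Θ j * HK.gen Θ i := by
  have := hk_rel Θ (HKRel.comm i j h₁ h₂)
  simpa [HK.gen] using this

lemma gen_kisel {i j : V} (h₁ : Θ i j) (h₂ : ¬ Θ j i) :
    HK.gen Θ i * HK.gen Θ j * HK.gen Θ i = HK.gen Θ i * HK.gen Θ j := by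
  have := hk_rel Θ (HKRel.kisel i j h₁ h₂)
  simpa [HK.gen] using this

lemma gen_kisel' {i j : V} (h₁ : Θ i j) (h₂ : ¬ Θ j i) :
    HK.gen Θ j * HK.gen Θ i * HK.gen Θ j = HK.gen Θ i * HK.gen Θ j := by
  have := hk_rel Θ (HKRel.kisel' i j h₁ h₂)
  simpa [HK.gen] using this

lemma gen_idem' (i : V) (x : HK Θ) : HK.gen Θ i * (HK.gen Θ i * x) = HK.gen Θ i * x := by
  rw [← mul_assoc, gen_idem]

lemma gen_comm' {i j : V} (h₁ : ¬ Θ i j) (h₂ : ¬ Θ j i) (x : HK Θ) :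
    HK.gen Θ i * (HK.gen Θ j * x) = HK.gen Θ j * (HK.gen Θ i * x) := by
  rw [← mul_assoc, ← mul_assoc, gen_comm Θ h₁ h₂]

/-- If `Θ j i` then `g i * (g j * (g i * x)) = g j * (g i * x)`. -/
lemma gen_kisel_r {i j : V} (h₁ : Θ j i) (h₂ : ¬ Θ i j) (x : HK Θ) :
    HK.gen Θ i * (HK.gen Θ j * (HK.gen Θ i * x)) = HK.gen Θ j * (HK.gen Θ i * x) := by
  rw [← mul_assoc, ← mul_assoc, gen_kisel' Θ h₁ h₂, mul_assoc]

/-- Sink absorption: if `i` has no `Θ`-arrow into any letter of `l`, then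
`g i * (hkw l * (g i * x)) = hkw l * (g i * x)`. -/
lemma sink_absorb' (i : V) (l : List V) (h : ∀ j ∈ l, ¬ Θ i j) (x : HK Θ) :
    HK.gen Θ i * (hkw Θ l * (HK.gen Θ i * x)) = hkw Θ l * (HK.gen Θ i * x) := by
  induction l using List.reverseRecOn generalizing x with
  | nil => simpa [hkw_nil] using gen_idem' Θ i x
  | append_singleton l j ih =>
    have hij : ¬ Θ i j := h j (by simp)
    have hl : ∀ k ∈ l, ¬ Θ i k := fun k hk => h k (by simp [hk])
    rw [hkw_append, hkw_singleton]
    simp only [mul_assoc]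
    by_cases hji : Θ j i
    · rw [show HK.gen Θ j * (HK.gen Θ i * x) =
          HK.gen Θ i * (HK.gen Θ j * (HK.gen Θ i * x)) from (gen_kisel_r Θ hji hij x).symm]
      rw [ih hl (HK.gen Θ j * (HK.gen Θ i * x)), gen_kisel_r Θ hji hij x]
    · rw [show HK.gen Θ j * (HK.gen Θ i * x) =
          HK.gen Θ i * (HK.gen Θ j * x) from (gen_comm' Θ hij hji x).symm]
      rw [ih hl (HK.gen Θ j * x), gen_comm' Θ hij hji x]

lemma sink_absorb (i : V) (l : List V) (h : ∀ j ∈ l, ¬ Θ i j) :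
    HK.gen Θ i * hkw Θ l * HK.gen Θ i = hkw Θ l * HK.gen Θ i := by
  have := sink_absorb' Θ i l h 1
  simpa [mul_assoc] using this

lemma hkw_pow (l : List V) (m : ℕ) :
    (hkw Θ l) ^ m = hkw Θ (List.flatten (List.replicate m l)) := by
  induction m with
  | zero => simp [hkw_nil]
  | succ m ih =>
    rw [List.replicate_succ, List.flatten_cons, hkw_append, pow_succ', ih]

lemma sink_absorb_pow (i : V) (l : List V) (h : ∀ j ∈ l, ¬ Θ i j) (m : ℕ) (x : HK Θ) :
    HK.gen Θ i * ((hkw Θ l) ^ m * (HK.gen Θ i * x)) = (hkw Θ l) ^ m * (HK.gen Θ i * x) := by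
  rw [hkw_pow]
  refine sink_absorb' Θ i _ (fun j hj => ?_) x
  rw [List.mem_flatten] at hj
  obtain ⟨s, hs, hjs⟩ := hj
  exact h j ((List.eq_of_mem_replicate hs) ▸ hjs)

end MonoidPart

end HKAux

namespace HKAux

section Words

variable {V : Type*} [DecidableEq V] (Θ : V → V → Prop)
variable (sk : ∀ S : Finset V, S.Nonempty → {i // i ∈ S})

/-- The canonical word of a finite set: recursively peel off a chosen "sink". -/
noncomputable def wlist (S : Finset V) : List V :=
  if h : S.Nonempty then wlist (S.erase (sk S h)) ++ [((sk S h) : V)] else []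
termination_by S.card
decreasing_by exact Finset.card_erase_lt_of_mem (sk S h).2

lemma wlist_eq (S : Finset V) (h : S.Nonempty) :
    wlist sk S = wlist sk (S.erase ((sk S h) : V)) ++ [((sk S h) : V)] := by
  rw [wlist]
  simp [h]

lemma wlist_empty : wlist (V := V) sk ∅ = [] := by
  rw [wlist]
  simp

lemma wlist_toFinset : ∀ (n : ℕ) (S : Finset V), S.card ≤ n → (wlist sk S).toFinset = S := by
  intro n
  induction n with
  | zero =>
    intro S hc
    have : S = ∅ := Finset.card_eq_zero.mp (Nat.le_zero.mp hc)
    subst this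
    simp [wlist_empty]
  | succ n ih =>
    intro S hc
    by_cases h : S.Nonempty
    · rw [wlist_eq sk S h]
      have hiS : ((sk S h) : V) ∈ S := (sk S h).2
      have hcard : (S.erase ((sk S h) : V)).card ≤ n := by
        have := Finset.card_erase_lt_of_mem hiS
        omega
      rw [List.toFinset_append, ih _ hcard]
      ext k
      simp only [Finset.mem_union, Finset.mem_erase, List.toFinset_cons, List.toFinset_nil,
        LawfulSingleton.insert_empty_eq, Finset.mem_singleton]
      rcases eq_or_ne k ((sk S h) : V) with rfl | hne
      · simp [hiS]
      · simp [hne]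
    · rw [Finset.not_nonempty_iff_eq_empty] at h
      subst h
      simp [wlist_empty]

lemma e_mul_gen (hsk : ∀ (S : Finset V) (h : S.Nonempty), ∀ j ∈ S, ¬ Θ ((sk S h) : V) j) : ∀ (n : ℕ) (S : Finset V), S.card ≤ n → ∀ j ∈ S,
    hkw Θ (wlist sk S) * HK.gen Θ j = hkw Θ (wlist sk S) := by
  intro n
  induction n with
  | zero =>
    intro S hc j hj
    have : S = ∅ := Finset.card_eq_zero.mp (Nat.le_zero.mp hc)
    subst this
    exact absurd hj (Finset.notMem_empty j)
  | succ n ih =>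
    intro S hc j hj
    have h : S.Nonempty := ⟨j, hj⟩
    set i : V := ((sk S h) : V) with hi
    have hiS : i ∈ S := (sk S h).2
    have hcard : (S.erase i).card ≤ n := by
      have := Finset.card_erase_lt_of_mem hiS
      omega
    rw [wlist_eq sk S h, hkw_append, hkw_singleton, ← hi]
    rcases eq_or_ne j i with rfl | hne
    · rw [mul_assoc, gen_idem]
    · have hjS' : j ∈ S.erase i := Finset.mem_erase.mpr ⟨hne, hj⟩
      have hIH : hkw Θ (wlist sk (S.erase i)) * HK.gen Θ j = hkw Θ (wlist sk (S.erase i)) :=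
        ih (S.erase i) hcard j hjS'
      have hij : ¬ Θ i j := hsk S h j hj
      by_cases hji : Θ j i
      · -- use j i j = j i
        have hkis : HK.gen Θ j * HK.gen Θ i * HK.gen Θ j = HK.gen Θ j * HK.gen Θ i :=
          gen_kisel Θ hji hij
        calc hkw Θ (wlist sk (S.erase i)) * HK.gen Θ i * HK.gen Θ j
            = hkw Θ (wlist sk (S.erase i)) * HK.gen Θ j * HK.gen Θ i * HK.gen Θ j := by
              rw [hIH]
          _ = hkw Θ (wlist sk (S.erase i)) * (HK.gen Θ j * HK.gen Θ i * HK.gen Θ j) := by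
              rw [mul_assoc, mul_assoc, mul_assoc]
          _ = hkw Θ (wlist sk (S.erase i)) * (HK.gen Θ j * HK.gen Θ i) := by rw [hkis]
          _ = hkw Θ (wlist sk (S.erase i)) * HK.gen Θ j * HK.gen Θ i := by rw [mul_assoc]
          _ = hkw Θ (wlist sk (S.erase i)) * HK.gen Θ i := by rw [hIH]
      · rw [mul_assoc, gen_comm Θ hij hji, ← mul_assoc, hIH]

lemma e_mul_word (hsk : ∀ (S : Finset V) (h : S.Nonempty), ∀ j ∈ S, ¬ Θ ((sk S h) : V) j) (S : Finset V) (l : List V) (hl : ∀ k ∈ l, k ∈ S) :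
    hkw Θ (wlist sk S) * hkw Θ l = hkw Θ (wlist sk S) := by
  induction l with
  | nil => rw [hkw_nil, mul_one]
  | cons j t iht =>
    rw [hkw_cons, ← mul_assoc, e_mul_gen Θ sk hsk S.card S le_rfl j (hl j (by simp))]
    exact iht (fun k hk => hl k (by simp [hk]))

lemma gen_mul_e (hsk : ∀ (S : Finset V) (h : S.Nonempty), ∀ j ∈ S, ¬ Θ ((sk S h) : V) j) : ∀ (n : ℕ) (S : Finset V), S.card ≤ n → ∀ j ∈ S,
    HK.gen Θ j * hkw Θ (wlist sk S) = hkw Θ (wlist sk S) := by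
  intro n
  induction n with
  | zero =>
    intro S hc j hj
    have : S = ∅ := Finset.card_eq_zero.mp (Nat.le_zero.mp hc)
    subst this
    exact absurd hj (Finset.notMem_empty j)
  | succ n ih =>
    intro S hc j hj
    have h : S.Nonempty := ⟨j, hj⟩
    set i : V := ((sk S h) : V) with hi
    have hiS : i ∈ S := (sk S h).2
    have hcard : (S.erase i).card ≤ n := by
      have := Finset.card_erase_lt_of_mem hiS
      omega
    rw [wlist_eq sk S h, hkw_append, hkw_singleton, ← hi]
    rcases eq_or_ne j i with rfl | hne
    · rw [← mul_assoc]
      refine sink_absorb Θ i (wlist sk (S.erase i)) (fun k hk => ?_)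
      have : k ∈ S.erase i := by
        rw [← wlist_toFinset sk (S.erase i).card (S.erase i) le_rfl]
        exact List.mem_toFinset.mpr hk
      exact hsk S h k (Finset.mem_of_mem_erase this)
    · rw [← mul_assoc, ih (S.erase i) hcard j (Finset.mem_erase.mpr ⟨hne, hj⟩)]

lemma word_mul_e (hsk : ∀ (S : Finset V) (h : S.Nonempty), ∀ j ∈ S, ¬ Θ ((sk S h) : V) j) (S : Finset V) (l : List V) (hl : ∀ k ∈ l, k ∈ S) :
    hkw Θ l * hkw Θ (wlist sk S) = hkw Θ (wlist sk S) := by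
  induction l with
  | nil => rw [hkw_nil, one_mul]
  | cons j t iht =>
    rw [hkw_cons, mul_assoc, iht (fun k hk => hl k (by simp [hk]))]
    exact gen_mul_e Θ sk hsk S.card S le_rfl j (hl j (by simp))

end Words

end HKAux

namespace HKAux

section Power

variable {V : Type*} [DecidableEq V] (Θ : V → V → Prop)

lemma first_split {i : V} : ∀ {l : List V}, i ∈ l → ∃ a b, l = a ++ i :: b ∧ i ∉ a := by
  intro l
  induction l with
  | nil => intro h; exact absurd h (List.not_mem_nil (a := i))
  | cons j t ih =>
    intro h
    rcases eq_or_ne j i with rfl | hne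
    · exact ⟨[], t, rfl, List.not_mem_nil (a := j)⟩
    · have hit : i ∈ t := by
        rcases List.mem_cons.mp h with h' | h'
        · exact absurd h'.symm hne
        · exact h'
      obtain ⟨a, b, rfl, hia⟩ := ih hit
      exact ⟨j :: a, b, rfl, by simp [hia, hne.symm]⟩

/-- Delete the first of two occurrences of a sink. -/
lemma delete_first (i : V) (a b : List V) (hb : i ∈ b) (hcond : ∀ k ∈ b, ¬ Θ i k) :
    hkw Θ (a ++ i :: b) = hkw Θ (a ++ b) := by
  obtain ⟨c, d, rfl⟩ := List.append_of_mem hb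
  have hc : ∀ k ∈ c, ¬ Θ i k := fun k hk => hcond k (by simp [hk])
  have habs := sink_absorb Θ i c hc
  calc hkw Θ (a ++ i :: (c ++ i :: d))
      = hkw Θ a * (HK.gen Θ i * hkw Θ c * HK.gen Θ i) * hkw Θ d := by
        rw [show a ++ i :: (c ++ i :: d) = a ++ ([i] ++ c ++ [i]) ++ d by simp]
        rw [hkw_append, hkw_append, hkw_append, hkw_append, hkw_singleton]
    _ = hkw Θ a * (hkw Θ c * HK.gen Θ i) * hkw Θ d := by rw [habs]
    _ = hkw Θ (a ++ (c ++ i :: d)) := by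
        rw [show a ++ (c ++ i :: d) = a ++ (c ++ [i]) ++ d by simp]
        rw [hkw_append, hkw_append, hkw_append, hkw_singleton]

lemma pow_formula (i : V) (a b : List V) (hcond : ∀ k ∈ b ++ a, ¬ Θ i k) :
    ∀ N : ℕ, (hkw Θ (a ++ i :: b)) ^ (N + 1) =
      hkw Θ a * ((hkw Θ (b ++ a)) ^ N * (HK.gen Θ i * hkw Θ b)) := by
  intro N
  induction N with
  | zero =>
    rw [pow_one, pow_zero, one_mul]
    rw [show a ++ i :: b = a ++ ([i] ++ b) by simp, hkw_append, hkw_append, hkw_singleton]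
  | succ N ih =>
    rw [pow_succ', ih]
    rw [show a ++ i :: b = a ++ ([i] ++ b) by simp, hkw_append, hkw_append, hkw_singleton]
    rw [mul_assoc, mul_assoc]
    congr 1
    rw [show hkw Θ b * (hkw Θ a * ((hkw Θ (b ++ a)) ^ N * (HK.gen Θ i * hkw Θ b)))
        = (hkw Θ (b ++ a)) ^ (N + 1) * (HK.gen Θ i * hkw Θ b) by
      rw [pow_succ', hkw_append, mul_assoc, mul_assoc]]
    exact sink_absorb_pow Θ i (b ++ a) hcond (N + 1) (hkw Θ b)

lemma pow_eq_e (sk : ∀ S : Finset V, S.Nonempty → {i // i ∈ S})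
    (hsk : ∀ (S : Finset V) (h : S.Nonempty), ∀ j ∈ S, ¬ Θ ((sk S h) : V) j) :
    ∀ (n : ℕ) (l : List V), l.length ≤ n →
      ∃ N : ℕ, (hkw Θ l) ^ (N + 1) = hkw Θ (wlist sk l.toFinset) := by
  intro n
  induction n with
  | zero =>
    intro l hl
    have hl0 : l = [] := by
      cases l with
      | nil => rfl
      | cons a t => simp at hl
    subst hl0
    exact ⟨0, by simp [hkw_nil, wlist_empty]⟩
  | succ n ih =>
    intro l hl
    by_cases hl0 : l = []
    · subst hl0
      exact ⟨0, by simp [hkw_nil, wlist_empty]⟩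
    · have hS : l.toFinset.Nonempty := by
        obtain ⟨x, hx⟩ := List.exists_mem_of_ne_nil l hl0
        exact ⟨x, List.mem_toFinset.mpr hx⟩
      have hil : ((sk l.toFinset hS) : V) ∈ l := List.mem_toFinset.mp (sk l.toFinset hS).2
      set i : V := ((sk l.toFinset hS) : V) with hiprop
      have hsinkl : ∀ k ∈ l, ¬ Θ i k := fun k hk =>
        hsk _ hS k (List.mem_toFinset.mpr hk)
      obtain ⟨a, b, hlab, hia⟩ := first_split hil
      by_cases hib : i ∈ b
      · have hcondb : ∀ k ∈ b, ¬ Θ i k := fun k hk => hsinkl k (by rw [hlab]; simp [hk])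
        have hdel : hkw Θ l = hkw Θ (a ++ b) := by
          rw [hlab]; exact delete_first Θ i a b hib hcondb
        have hfin : (a ++ b).toFinset = l.toFinset := by
          rw [hlab]; ext k
          simp only [List.toFinset_append, List.toFinset_cons, Finset.mem_union,
            List.mem_toFinset, Finset.mem_insert]
          constructor
          · rintro (h | h)
            · exact Or.inl h
            · exact Or.inr (Or.inr h)
          · rintro (h | rfl | h)
            · exact Or.inl h
            · exact Or.inr hib
            · exact Or.inr h
        have hlen : (a ++ b).length ≤ n := by
          have hll := congrArg List.length hlab
          simp only [List.length_append, List.length_cons] at hll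
          simp only [List.length_append]
          omega
        obtain ⟨N, hN⟩ := ih (a ++ b) hlen
        exact ⟨N, by rw [hdel, hN, hfin]⟩
      · have hcond : ∀ k ∈ b ++ a, ¬ Θ i k := fun k hk => by
          rcases List.mem_append.mp hk with h | h
          · exact hsinkl k (by rw [hlab]; simp [h])
          · exact hsinkl k (by rw [hlab]; simp [h])
        have hfin' : (b ++ a).toFinset = l.toFinset.erase i := by
          conv_rhs => rw [hlab]
          ext k
          simp only [List.toFinset_append, Finset.mem_union, List.mem_toFinset,
            Finset.mem_erase, List.toFinset_cons, Finset.mem_insert]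
          constructor
          · rintro (h | h)
            · exact ⟨fun he => hib (he ▸ h), Or.inr (Or.inr h)⟩
            · exact ⟨fun he => hia (he ▸ h), Or.inl h⟩
          · rintro ⟨hne, (h | rfl | h)⟩
            · exact Or.inr h
            · exact absurd rfl hne
            · exact Or.inl h
        have hlen : (b ++ a).length ≤ n := by
          have hll := congrArg List.length hlab
          simp only [List.length_append, List.length_cons] at hll
          simp only [List.length_append]
          omega
        obtain ⟨M, hM⟩ := ih (b ++ a) hlen
        refine ⟨M + 1, ?_⟩
        have hw : wlist sk l.toFinset = wlist sk (l.toFinset.erase i) ++ [i] :=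
          wlist_eq sk l.toFinset hS
        have hstep : (hkw Θ l) ^ (M + 1 + 1)
            = hkw Θ a * ((hkw Θ (b ++ a)) ^ (M + 1) * (HK.gen Θ i * hkw Θ b)) := by
          rw [show hkw Θ l = hkw Θ (a ++ i :: b) by rw [hlab]]
          exact pow_formula Θ i a b hcond (M + 1)
        rw [hstep, hM, hfin']
        rw [show hkw Θ (wlist sk (l.toFinset.erase i)) * (HK.gen Θ i * hkw Θ b)
            = hkw Θ (wlist sk l.toFinset) * hkw Θ b by
          rw [← mul_assoc, ← hkw_singleton, ← hkw_append, ← hw]]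
        rw [← mul_assoc]
        rw [word_mul_e Θ sk hsk l.toFinset a
          (fun k hk => List.mem_toFinset.mpr (by rw [hlab]; simp [hk]))]
        rw [e_mul_word Θ sk hsk l.toFinset b
          (fun k hk => List.mem_toFinset.mpr (by rw [hlab]; simp [hk]))]

end Power

end HKAux

namespace HKAux

section Support

variable {V : Type*} [DecidableEq V] (Θ : V → V → Prop)

/-- The support of an element of the Hecke–Kiselman monoid. -/
def hksupp (x : HK Θ) : Finset V :=
  Con.liftOn x (fun w => (FreeMonoid.toList w).toFinset) (by
    intro u v h
    induction h with
    | of x y hxy =>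
      cases hxy with
      | idem i => ext k; simp [FreeMonoid.toList_mul, FreeMonoid.toList_of]
      | comm i j h₁ h₂ =>
        ext k; simp [FreeMonoid.toList_mul, FreeMonoid.toList_of]
        try tauto
      | braid i j h₁ h₂ =>
        ext k; simp [FreeMonoid.toList_mul, FreeMonoid.toList_of]
        try tauto
      | kisel i j h₁ h₂ =>
        ext k; simp [FreeMonoid.toList_mul, FreeMonoid.toList_of]
        try tauto
      | kisel' i j h₁ h₂ =>
        ext k; simp [FreeMonoid.toList_mul, FreeMonoid.toList_of]
        try tauto
    | refl x => rfl
    | symm _ ih => exact ih.symm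
    | trans _ _ ih1 ih2 => exact ih1.trans ih2
    | mul _ _ ih1 ih2 =>
      ext k
      simp only [FreeMonoid.toList_mul, List.toFinset_append, Finset.mem_union] at *
      rw [ih1, ih2])

lemma hksupp_hkw (l : List V) : hksupp Θ (hkw Θ l) = l.toFinset := rfl

end Support

section Degeneracy

/-- A "ranked parent" structure on a graph: each vertex has at most one
neighbour of smaller rank, and adjacent vertices have distinct ranks. -/
def RP {W : Type*} (H : SimpleGraph W) : Prop :=
  ∃ (f : W → ℕ) (p : W → W), ∀ i j, H.Adj i j → f i ≠ f j ∧ (f j < f i → j = p i)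

lemma rp_of_iso {W W' : Type*} {H : SimpleGraph W} {H' : SimpleGraph W'}
    (φ : H ≃g H') (h : RP H') : RP H := by
  obtain ⟨f, p, hfp⟩ := h
  refine ⟨fun i => f (φ i), fun i => φ.symm (p (φ i)), fun i j hadj => ?_⟩
  have hadj' : H'.Adj (φ i) (φ j) := φ.map_adj_iff.mpr hadj
  refine ⟨(hfp _ _ hadj').1, fun hlt => ?_⟩
  have h2 := (hfp _ _ hadj').2 hlt
  calc j = φ.symm (φ j) := (φ.toEquiv.symm_apply_apply j).symm
    _ = φ.symm (p (φ i)) := by rw [h2]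

lemma rp_pathGraph (n : ℕ) : RP (pathGraph n) := by
  refine ⟨fun i => (i : ℕ),
    fun i => if h : 0 < (i : ℕ) then ⟨(i : ℕ) - 1, lt_of_le_of_lt (Nat.sub_le _ _) i.isLt⟩ else i,
    fun i j hadj => ?_⟩
  rw [pathGraph_adj] at hadj
  dsimp only
  constructor
  · omega
  · intro hlt
    have h1 : (j : ℕ) + 1 = (i : ℕ) := by omega
    rw [dif_pos (by omega : 0 < (i : ℕ))]
    apply Fin.ext
    simp
    omega

lemma rp_typeD (n : ℕ) (hn : 3 ≤ n) : RP (typeD n) := by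
  refine ⟨fun i => if (i : ℕ) = 0 then n else (i : ℕ),
    fun i => if h : (i : ℕ) = 0 then ⟨2, by omega⟩
      else if h1 : 1 < (i : ℕ) then ⟨(i : ℕ) - 1, lt_of_le_of_lt (Nat.sub_le _ _) i.isLt⟩ else i,
    fun i j hadj => ?_⟩
  rw [typeD, SimpleGraph.fromRel_adj] at hadj
  obtain ⟨hne, hrel⟩ := hadj
  have hne' : (i : ℕ) ≠ (j : ℕ) := fun h => hne (Fin.ext h)
  have hjn : (j : ℕ) < n := j.isLt
  have hin : (i : ℕ) < n := i.isLt
  dsimp only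
  constructor
  · split_ifs <;> omega
  · intro hlt
    rcases hrel with (⟨h1, h2⟩ | ⟨h1, h2⟩) | (⟨h1, h2⟩ | ⟨h1, h2⟩)
    · rw [if_neg (by omega), if_neg (by omega)] at hlt; omega
    · rw [dif_pos h1]
      apply Fin.ext
      simpa using h2
    · rw [if_neg (by omega), if_neg (by omega)] at hlt
      rw [dif_neg (by omega), dif_pos (by omega)]
      apply Fin.ext
      simp
      omega
    · rw [if_pos h1, if_neg (by omega)] at hlt
      omega

lemma rp_typeE (n : ℕ) (hn : 4 ≤ n) : RP (typeE n) := by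
  refine ⟨fun i => if (i : ℕ) = 0 then n else (i : ℕ),
    fun i => if h : (i : ℕ) = 0 then ⟨3, by omega⟩
      else if h1 : 1 < (i : ℕ) then ⟨(i : ℕ) - 1, lt_of_le_of_lt (Nat.sub_le _ _) i.isLt⟩ else i,
    fun i j hadj => ?_⟩
  rw [typeE, SimpleGraph.fromRel_adj] at hadj
  obtain ⟨hne, hrel⟩ := hadj
  have hne' : (i : ℕ) ≠ (j : ℕ) := fun h => hne (Fin.ext h)
  have hjn : (j : ℕ) < n := j.isLt
  have hin : (i : ℕ) < n := i.isLt
  dsimp only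
  constructor
  · split_ifs <;> omega
  · intro hlt
    rcases hrel with (⟨h1, h2⟩ | ⟨h1, h2⟩) | (⟨h1, h2⟩ | ⟨h1, h2⟩)
    · rw [if_neg (by omega), if_neg (by omega)] at hlt; omega
    · rw [dif_pos h1]
      apply Fin.ext
      simpa using h2
    · rw [if_neg (by omega), if_neg (by omega)] at hlt
      rw [dif_neg (by omega), dif_pos (by omega)]
      apply Fin.ext
      simp
      omega
    · rw [if_pos h1, if_neg (by omega)] at hlt
      omega

/-- Every nonempty set of vertices of a simply laced Dynkin diagram contains a
vertex with at most one neighbour inside the set. -/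
lemma degenerate {V : Type*} [Fintype V] (G : SimpleGraph V) (hG : IsSimplyLacedDynkin G)
    (S : Finset V) (hS : S.Nonempty) :
    ∃ i ∈ S, ∀ j ∈ S, ∀ k ∈ S, G.Adj i j → G.Adj i k → j = k := by
  classical
  obtain ⟨v, hv⟩ := hS
  set c := G.connectedComponentMk v with hc
  have hrp : RP (G.induce c.supp) := by
    rcases hG c with ⟨n, hn, ⟨φ⟩⟩ | ⟨n, hn, ⟨φ⟩⟩ | ⟨n, hn, ⟨φ⟩⟩
    · exact rp_of_iso φ (rp_pathGraph n)
    · exact rp_of_iso φ (rp_typeD n (by omega))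
    · exact rp_of_iso φ (rp_typeE n (by rcases hn with h | h | h <;> omega))
  obtain ⟨f, p, hfp⟩ := hrp
  haveI : Fintype ↥c.supp := Fintype.ofFinite _
  set A : Finset ↥c.supp := Finset.univ.filter (fun x => (x : V) ∈ S) with hA
  have hvc : v ∈ c.supp := by
    rw [SimpleGraph.ConnectedComponent.mem_supp_iff]
  have hAne : A.Nonempty := ⟨⟨v, hvc⟩, by simp [hA, hv]⟩
  obtain ⟨x, hxA, hmax⟩ := A.exists_max_image f hAne
  refine ⟨(x : V), by simpa [hA] using hxA, fun j hj k hk haj hak => ?_⟩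
  have hmemc : ∀ {w : V}, G.Adj (x : V) w → w ∈ c.supp := by
    intro w hw
    have hx : (x : V) ∈ c.supp := x.2
    rw [SimpleGraph.ConnectedComponent.mem_supp_iff] at hx ⊢
    rw [← hx]
    exact SimpleGraph.ConnectedComponent.sound hw.symm.reachable
  have hjc : j ∈ c.supp := hmemc haj
  have hkc : k ∈ c.supp := hmemc hak
  have haj' : (G.induce c.supp).Adj x ⟨j, hjc⟩ := by
    simp only [SimpleGraph.comap_adj, Function.Embedding.coe_subtype]
    exact haj
  have hak' : (G.induce c.supp).Adj x ⟨k, hkc⟩ := by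
    simp only [SimpleGraph.comap_adj, Function.Embedding.coe_subtype]
    exact hak
  have h1 := hfp x ⟨j, hjc⟩ haj'
  have h2 := hfp x ⟨k, hkc⟩ hak'
  have hjlt : f ⟨j, hjc⟩ < f x :=
    lt_of_le_of_ne (hmax _ (by simp [hA, hj])) (fun h => h1.1 h.symm)
  have hklt : f ⟨k, hkc⟩ < f x :=
    lt_of_le_of_ne (hmax _ (by simp [hA, hk])) (fun h => h2.1 h.symm)
  have := (h1.2 hjlt).trans (h2.2 hklt).symm
  exact congrArg Subtype.val this

/-- Every nonempty finite set contains a `Θ`-sink. -/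
lemma exists_sink {V : Type*} [Fintype V] (G : SimpleGraph V) (Θ : V → V → Prop)
    (hΘ : IsOrientation G Θ)
    (hdeg : ∀ S : Finset V, S.Nonempty →
      ∃ i ∈ S, ∀ j ∈ S, ∀ k ∈ S, G.Adj i j → G.Adj i k → j = k) :
    ∀ (n : ℕ) (S : Finset V), S.card ≤ n → S.Nonempty → ∃ i ∈ S, ∀ j ∈ S, ¬ Θ i j := by
  classical
  intro n
  induction n with
  | zero =>
    intro S hc hne
    rw [Finset.card_eq_zero.mp (Nat.le_zero.mp hc)] at hne
    exact absurd hne (by simp)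
  | succ n ih =>
    intro S hc hne
    obtain ⟨i, hiS, hleaf⟩ := hdeg S hne
    by_cases hsink : ∀ j ∈ S, ¬ Θ i j
    · exact ⟨i, hiS, hsink⟩
    · push_neg at hsink
      obtain ⟨j₀, hj₀S, hθ⟩ := hsink
      have hne' : j₀ ≠ i := fun h => hΘ.2 i j₀ hθ (h ▸ hθ)
      have hS' : (S.erase i).Nonempty := ⟨j₀, Finset.mem_erase.mpr ⟨hne', hj₀S⟩⟩
      have hcard : (S.erase i).card ≤ n := by
        have := Finset.card_erase_lt_of_mem hiS
        omega
      obtain ⟨i', hi', hsink'⟩ := ih (S.erase i) hcard hS'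
      refine ⟨i', (Finset.mem_erase.mp hi').2, fun j hj hθ' => ?_⟩
      by_cases hji : j = i
      · subst hji
        have hadj1 : G.Adj j i' := (hΘ.1 j i').mpr (Or.inr hθ')
        have hadj2 : G.Adj j j₀ := (hΘ.1 j j₀).mpr (Or.inl hθ)
        have heq := hleaf i' (Finset.mem_erase.mp hi').2 j₀ hj₀S hadj1 hadj2
        exact hΘ.2 j j₀ hθ (heq ▸ hθ')
      · exact hsink' j (Finset.mem_erase.mpr ⟨hji, hj⟩) hθ'

end Degeneracy

end HKAux

open HKAux in
/-- For every orientation of a simply laced Dynkin diagram with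
`n` vertices, the Kiselman quotient of the 0-Hecke monoid has exactly `2 ^ n`
idempotents. -/
theorem kiselmanQuotient_card_idempotents {V : Type*} [Fintype V] (G : SimpleGraph V)
    (hG : IsSimplyLacedDynkin G) (Θ : V → V → Prop) (hΘ : IsOrientation G Θ) :
    Nat.card {x : HK Θ // x * x = x} = 2 ^ Fintype.card V := by
  classical
  letI : DecidableEq V := Classical.decEq V
  have hdeg := fun S hS => degenerate G hG S hS
  have hsink := exists_sink G Θ hΘ hdeg
  let sk : ∀ S : Finset V, S.Nonempty → {i // i ∈ S} := fun S h =>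
    ⟨(hsink S.card S le_rfl h).choose, (hsink S.card S le_rfl h).choose_spec.1⟩
  have hsk : ∀ (S : Finset V) (h : S.Nonempty), ∀ j ∈ S, ¬ Θ ((sk S h) : V) j :=
    fun S h => (hsink S.card S le_rfl h).choose_spec.2
  have hidem : ∀ S : Finset V,
      hkw Θ (wlist sk S) * hkw Θ (wlist sk S) = hkw Θ (wlist sk S) := by
    intro S
    refine e_mul_word Θ sk hsk S (wlist sk S) (fun k hk => ?_)
    have hmem : k ∈ (wlist sk S).toFinset := List.mem_toFinset.mpr hk
    rwa [wlist_toFinset sk S.card S le_rfl] at hmem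
  let F : Finset V → {x : HK Θ // x * x = x} := fun S => ⟨hkw Θ (wlist sk S), hidem S⟩
  have hinj : Function.Injective F := by
    intro S T h
    have h' : hkw Θ (wlist sk S) = hkw Θ (wlist sk T) := congrArg Subtype.val h
    have h'' := congrArg (hksupp Θ) h'
    rwa [hksupp_hkw, hksupp_hkw, wlist_toFinset sk S.card S le_rfl,
      wlist_toFinset sk T.card T le_rfl] at h''
  have hsurj : Function.Surjective F := by
    rintro ⟨x, hx⟩
    obtain ⟨w, rfl⟩ := Con.mk'_surjective (c := conGen (HKRel Θ)) x
    have hxw : hkw Θ (FreeMonoid.toList w) = (conGen (HKRel Θ)).mk' w := rfl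
    obtain ⟨N, hN⟩ :=
      pow_eq_e Θ sk hsk (FreeMonoid.toList w).length (FreeMonoid.toList w) le_rfl
    have hpow : ∀ m : ℕ, ((conGen (HKRel Θ)).mk' w) ^ (m + 1) = (conGen (HKRel Θ)).mk' w := by
      intro m
      induction m with
      | zero => rw [pow_one]
      | succ m ih => rw [pow_succ, ih, hx]
    refine ⟨(FreeMonoid.toList w).toFinset, ?_⟩
    apply Subtype.ext
    show hkw Θ (wlist sk (FreeMonoid.toList w).toFinset) = (conGen (HKRel Θ)).mk' w
    rw [← hN, hxw, hpow N]
  have hcard : Nat.card (Finset V) = Nat.card {x : HK Θ // x * x = x} :=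
    Nat.card_eq_of_bijective F ⟨hinj, hsurj⟩
  rw [← hcard, Nat.card_eq_fintype_card, Fintype.card_finset]
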